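/- arXiv:2105.01988 — 3 statements merged into one kernel-verified Lean document; each statement's English description precedes it below -/
import Mathlib

section
/- Let T > 0 and Δ be real numbers, c a real number, N a natural number, and define arrival times r : ℕ → ℝ by r n = c + n·T for n ≤ N and r n = c + n·T + Δ for n > N. Then the number of indices n > N with r n < r N (i.e., packets sent under the new configuration that overtake the last packet of the old configuration) is at most ⌈|Δ|/T⌉. -/
/-- The number of packets sent under the new configuration that overtake the last
packet of the old configuration is at most `⌈|Δ|/T⌉`. -/
theorem overtaking_packets_bound
    (T Δ c : ℝ) (hT : 0 < T) (N : ℕ) (r : ℕ → ℝ)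
    (h_old : ∀ n : ℕ, n ≤ N → r n = c + (n : ℝ) * T)
    (h_new : ∀ n : ℕ, N < n → r n = c + (n : ℝ) * T + Δ) :
    ({n : ℕ | N < n ∧ r n < r N}.ncard : ℤ) ≤ ⌈|Δ| / T⌉ := by
  have hceil0 : 0 ≤ ⌈|Δ| / T⌉ := by
    apply Int.ceil_nonneg
    positivity
  set k : ℕ := (⌈|Δ| / T⌉).toNat with hk
  have hsub : {n : ℕ | N < n ∧ r n < r N} ⊆ ↑(Finset.Ioc N (N + k)) := by
    intro n hn
    obtain ⟨hn1, hn2⟩ := hn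
    rw [h_new n hn1, h_old N le_rfl] at hn2
    -- (n - N) * T < -Δ ≤ |Δ|
    have h1 : ((n : ℝ) - N) * T < |Δ| := by
      have : (n : ℝ) * T + Δ < N * T := by linarith
      have h2 : -Δ ≤ |Δ| := neg_le_abs Δ
      nlinarith
    have h2 : ((n : ℝ) - N) < |Δ| / T := (lt_div_iff₀ hT).mpr h1
    have h3 : ((n : ℤ) - N : ℤ) < ⌈|Δ| / T⌉ + 1 := by
      have : (((n : ℤ) - N : ℤ) : ℝ) < |Δ| / T := by push_cast; linarith
      have := this.trans_le (Int.le_ceil _)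
      exact_mod_cast Int.lt_add_one_of_le (by exact_mod_cast this.le)
    have h4 : (n : ℤ) ≤ N + ⌈|Δ| / T⌉ := by omega
    have h5 : n ≤ N + k := by
      have : (n : ℤ) ≤ (N : ℤ) + (k : ℤ) := by
        rw [hk, Int.toNat_of_nonneg hceil0]; exact h4
      exact_mod_cast this
    simp only [Finset.coe_Ioc, Set.mem_Ioc]
    exact ⟨hn1, h5⟩
  have hfin : (↑(Finset.Ioc N (N + k)) : Set ℕ).Finite := (Finset.Ioc N (N + k)).finite_toSet
  have hcard : {n : ℕ | N < n ∧ r n < r N}.ncard ≤ k := by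
    calc {n : ℕ | N < n ∧ r n < r N}.ncard
        ≤ (↑(Finset.Ioc N (N + k)) : Set ℕ).ncard := Set.ncard_le_ncard hsub hfin
      _ = (Finset.Ioc N (N + k)).card := Set.ncard_coe_finset _
      _ = k := by simp [Nat.Ioc_eq_range']
  calc ({n : ℕ | N < n ∧ r n < r N}.ncard : ℤ) ≤ (k : ℤ) := by exact_mod_cast hcard
    _ = ⌈|Δ| / T⌉ := Int.toNat_of_nonneg hceil0
end

section
/- Let T > 0 and Δ be real numbers, c a real number, N a natural number, and define arrival times r : ℕ → ℝ by r n = c + n·T for n ≤ N and r n = c + n·T + Δ for n > N. Then the number of indices n such that either n ≥ 1 and the inter-arrival time r n − r (n−1) differs from T, or n is involved in a reordering (there exists m < n with r m > r n, or m > n with r m < r n), is at most 2·⌈|Δ|/T⌉. -/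
/-- The number of packets that either do not have inter-arrival time `T` or are
involved in a reordering is at most `2·⌈|Δ|/T⌉`. -/
theorem transition_packets_bound
    (T Δ c : ℝ) (hT : 0 < T) (N : ℕ) (r : ℕ → ℝ)
    (h_old : ∀ n : ℕ, n ≤ N → r n = c + (n : ℝ) * T)
    (h_new : ∀ n : ℕ, N < n → r n = c + (n : ℝ) * T + Δ) :
    ({n : ℕ | (1 ≤ n ∧ r n - r (n - 1) ≠ T) ∨
        (∃ m : ℕ, (m < n ∧ r m > r n) ∨ (n < m ∧ r m < r n))}.ncard : ℤ)
      ≤ 2 * ⌈|Δ| / T⌉ := by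
  have hK0 : (0:ℤ) ≤ ⌈|Δ| / T⌉ := Int.ceil_nonneg (by positivity)
  by_cases hΔ : Δ = 0
  · subst hΔ
    have hr : ∀ n : ℕ, r n = c + (n : ℝ) * T := by
      intro n
      rcases le_or_gt n N with h | h
      · exact h_old n h
      · simpa using h_new n h
    have hempty : {n : ℕ | (1 ≤ n ∧ r n - r (n - 1) ≠ T) ∨
        (∃ m : ℕ, (m < n ∧ r m > r n) ∨ (n < m ∧ r m < r n))} = ∅ := by
      ext n
      simp only [Set.mem_setOf_eq, Set.mem_empty_iff_false, iff_false]
      rintro (⟨hn1, hne⟩ | ⟨m, ⟨hmn, hgt⟩ | ⟨hnm, hlt⟩⟩)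
      · apply hne
        rw [hr n, hr (n - 1)]
        have hcast : ((n - 1 : ℕ) : ℝ) = (n : ℝ) - 1 := by
          have := Nat.cast_sub (R := ℝ) hn1; simpa using this
        rw [hcast]; ring
      · rw [hr m, hr n] at hgt
        have : (m : ℝ) < (n : ℝ) := by exact_mod_cast hmn
        nlinarith
      · rw [hr m, hr n] at hlt
        have : (n : ℝ) < (m : ℝ) := by exact_mod_cast hnm
        nlinarith
    rw [hempty]
    simpa using hK0
  · -- Δ ≠ 0
    have hK1 : (1:ℤ) ≤ ⌈|Δ| / T⌉ := by
      have : (0:ℝ) < |Δ| / T := by positivity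
      exact Int.ceil_pos.mpr this
    set k := (⌈|Δ| / T⌉).toNat with hk
    have hkK : (k : ℤ) = ⌈|Δ| / T⌉ := Int.toNat_of_nonneg hK0
    have hk1 : 1 ≤ k := by omega
    have key : ∀ a b : ℕ, a < b → r b < r a →
        a ≤ N ∧ N < b ∧ b - a ≤ k - 1 := by
      intro a b hab hba
      have hcab : (a : ℝ) < (b : ℝ) := by exact_mod_cast hab
      have ha : a ≤ N := by
        by_contra h
        push_neg at h
        rw [h_new a h, h_new b (h.trans hab)] at hba
        nlinarith
      have hb : N < b := by
        by_contra h
        push_neg at h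
        rw [h_old b h, h_old a (le_of_lt (lt_of_lt_of_le hab h))] at hba
        nlinarith
      refine ⟨ha, hb, ?_⟩
      have hineq : ((b:ℝ) - a) * T < -Δ := by
        rw [h_old a ha, h_new b hb] at hba
        nlinarith
      have hΔneg : Δ < 0 := by nlinarith
      have hlt : ((b - a : ℕ) : ℤ) < ⌈|Δ| / T⌉ := by
        rw [Int.lt_ceil]
        have hcast : (((b - a : ℕ) : ℤ) : ℝ) = (b:ℝ) - a := by
          push_cast [Nat.cast_sub hab.le]; ring
        rw [hcast, abs_of_neg hΔneg, lt_div_iff₀ hT]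
        exact hineq
      omega
    have hsub : {n : ℕ | (1 ≤ n ∧ r n - r (n - 1) ≠ T) ∨
        (∃ m : ℕ, (m < n ∧ r m > r n) ∨ (n < m ∧ r m < r n))}
        ⊆ ↑(Finset.Icc (N + 2 - k) (N + k)) := by
      intro n hn
      simp only [Finset.coe_Icc, Set.mem_Icc]
      rcases hn with ⟨hn1, hne⟩ | ⟨m, ⟨hmn, hgt⟩ | ⟨hnm, hlt⟩⟩
      · have hn' : n = N + 1 := by
          by_contra h
          apply hne
          have hcast : ((n - 1 : ℕ) : ℝ) = (n : ℝ) - 1 := by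
            have := Nat.cast_sub (R := ℝ) hn1; simpa using this
          rcases le_or_gt n N with h1 | h1
          · rw [h_old n h1, h_old (n - 1) (le_trans (Nat.sub_le n 1) h1), hcast]
            ring
          · have h2 : N < n - 1 := by omega
            rw [h_new n h1, h_new (n - 1) h2, hcast]
            ring
        omega
      · obtain ⟨h1, h2, h3⟩ := key m n hmn hgt
        omega
      · obtain ⟨h1, h2, h3⟩ := key n m hnm hlt
        omega
    have hcard : ({n : ℕ | (1 ≤ n ∧ r n - r (n - 1) ≠ T) ∨
        (∃ m : ℕ, (m < n ∧ r m > r n) ∨ (n < m ∧ r m < r n))}).ncard ≤ 2 * k := by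
      calc _ ≤ (↑(Finset.Icc (N + 2 - k) (N + k)) : Set ℕ).ncard :=
              Set.ncard_le_ncard hsub (Finset.finite_toSet _)
        _ = (Finset.Icc (N + 2 - k) (N + k)).card := Set.ncard_coe_finset _
        _ = N + k + 1 - (N + 2 - k) := Nat.card_Icc _ _
        _ ≤ 2 * k := by omega
    calc (({n : ℕ | (1 ≤ n ∧ r n - r (n - 1) ≠ T) ∨
        (∃ m : ℕ, (m < n ∧ r m > r n) ∨ (n < m ∧ r m < r n))}).ncard : ℤ)
        ≤ ((2 * k : ℕ) : ℤ) := by exact_mod_cast hcard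
      _ = 2 * ⌈|Δ| / T⌉ := by push_cast [hkK]; ring
end

section
/- Let t₀ be a real number, t_cycle > 0, t_trans > 0, t_e2e ≥ 0, and let φ be a phase with 0 ≤ φ ≤ t_cycle − t_trans. Suppose the source emits packets at times s m = t₀ + φ + m·t_cycle for m ∈ ℕ, each packet's delivery completing at s m + t_e2e, and let t_act = t₀ + k·t_cycle for a natural number k ≥ 1. Then every packet emitted before t_act is completely delivered by t_act + t_e2e − t_trans; in particular, the transition interval during which old packets are still in transit after t_act is upper-bounded by the end-to-end delay t_e2e. -/
/-- Every packet emitted before the activation time is completely delivered by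
`t_act + t_e2e − t_trans`; in particular the transition interval is upper-bounded
by the end-to-end delay. -/
theorem transition_interval_bound
    (t₀ t_cycle t_trans t_e2e φ : ℝ)
    (h_cycle : 0 < t_cycle) (h_trans : 0 < t_trans) (h_e2e : 0 ≤ t_e2e)
    (hφ₀ : 0 ≤ φ) (hφ₁ : φ ≤ t_cycle - t_trans)
    (s : ℕ → ℝ) (hs : ∀ m : ℕ, s m = t₀ + φ + (m : ℝ) * t_cycle)
    (k : ℕ) (hk : 1 ≤ k) (t_act : ℝ) (h_act : t_act = t₀ + (k : ℝ) * t_cycle) :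
    ∀ m : ℕ, s m < t_act → s m + t_e2e ≤ t_act + t_e2e - t_trans := by
  intro m hm
  rw [hs] at hm ⊢
  rw [h_act] at hm ⊢
  -- from hm: φ + m * t_cycle < k * t_cycle, with φ ≥ 0 so m < k
  have hmk : (m : ℝ) * t_cycle < (k : ℝ) * t_cycle := by nlinarith
  have hmk' : m < k := by
    by_contra h
    push_neg at h
    have : (k : ℝ) ≤ (m : ℝ) := by exact_mod_cast h
    nlinarith
  have h1 : (m : ℝ) + 1 ≤ (k : ℝ) := by exact_mod_cast hmk'
  nlinarith
end
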